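/- If L is a proper selfdual Lagrangian on a reflexive Banach space X × X*, then the vector field x ↦ ∂̄L(x) = {p : L(x,p) = ⟨x,p⟩} is a maximal monotone operator. -/

import Mathlib

open NormedSpace

/-- Legendre transform of a Lagrangian in both variables. -/
noncomputable def LagConj {X : Type*} [NormedAddCommGroup X] [NormedSpace ℝ X]
    (L : X × StrongDual ℝ X → EReal) (p : StrongDual ℝ X) (u : X) : EReal :=
  ⨆ yq : X × StrongDual ℝ X, (((p yq.1) + (yq.2 u) : ℝ) : EReal) - L yq

section Helpers

lemma er_exists_coe {a : EReal} (h1 : a ≠ ⊥) (h2 : a ≠ ⊤) : ∃ l : ℝ, a = (l : EReal) := by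
  induction a with
  | bot => simp at h1
  | coe l => exact ⟨l, rfl⟩
  | top => simp at h2

lemma er_eq_coe_of_le_coe {a : EReal} (hbot : a ≠ ⊥) {t : ℝ} (h : a ≤ (t : EReal)) :
    ∃ l : ℝ, a = (l : EReal) ∧ l ≤ t := by
  induction a with
  | bot => simp at hbot
  | coe l => exact ⟨l, rfl, EReal.coe_le_coe_iff.1 h⟩
  | top => simp at h

lemma er_sub_coe_ne_bot {b : EReal} (hb : b ≠ ⊥) (κ : ℝ) : b - (κ : EReal) ≠ ⊥ := by
  induction b with
  | bot => simp at hb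
  | coe r => rw [← EReal.coe_sub]; exact EReal.coe_ne_bot _
  | top => rw [EReal.top_sub_coe]; simp

lemma er_sub_le (a : EReal) (b c : ℝ) :
    a - (b : EReal) ≤ (c : EReal) ↔ a ≤ ((c + b : ℝ) : EReal) := by
  rw [EReal.sub_le_iff_le_add (.inl (EReal.coe_ne_bot b)) (.inl (EReal.coe_ne_top b))]
  norm_cast

lemma er_le_sub (a : EReal) (b c : ℝ) :
    (c : EReal) ≤ a - (b : EReal) ↔ ((c + b : ℝ) : EReal) ≤ a := by
  rw [EReal.le_sub_iff_add_le (.inl (EReal.coe_ne_bot b)) (.inl (EReal.coe_ne_top b))]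
  norm_cast

lemma er_coe_sub_sub (A c : ℝ) (b : EReal) (hb : b ≠ ⊥) :
    (A : EReal) - (b - (c : EReal)) = ((A + c : ℝ) : EReal) - b := by
  induction b with
  | bot => simp at hb
  | coe r => norm_cast; ring
  | top => rw [EReal.top_sub_coe]; simp

lemma er_coe_sub_sub' (A κ : ℝ) (b : EReal) :
    ((A - κ : ℝ) : EReal) - b = ((A : ℝ) : EReal) - b - (κ : EReal) := by
  induction b with
  | bot => rw [EReal.sub_bot (EReal.coe_ne_bot _), EReal.sub_bot (EReal.coe_ne_bot _),
      EReal.top_sub_coe]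
  | coe r => norm_cast; ring
  | top => simp

lemma er_iSup_sub_coe {ι : Sort*} [Nonempty ι] (f : ι → EReal) (c : ℝ) :
    ⨆ i, (f i - (c : EReal)) = (⨆ i, f i) - (c : EReal) := by
  apply le_antisymm
  · refine iSup_le fun i => ?_
    rw [EReal.sub_le_iff_le_add (.inl (EReal.coe_ne_bot c)) (.inl (EReal.coe_ne_top c)),
      EReal.sub_add_cancel]
    exact le_iSup f i
  · rw [EReal.sub_le_iff_le_add (.inl (EReal.coe_ne_bot c)) (.inl (EReal.coe_ne_top c))]
    refine iSup_le fun i => ?_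
    calc f i = (f i - (c : EReal)) + (c : EReal) := EReal.sub_add_cancel.symm
      _ ≤ (⨆ j, (f j - (c : EReal))) + (c : EReal) :=
        add_le_add_left (le_iSup (fun j => f j - (c : EReal)) i) _

lemma real_le_of_forall_pos_le_add' {a b : ℝ} (h : ∀ ε : ℝ, 0 < ε → a ≤ b + ε) : a ≤ b := by
  by_contra hc
  push_neg at hc
  have := h ((a - b) / 2) (by linarith)
  linarith

lemma half_norm_sq_le {Y : Type*} [NormedAddCommGroup Y] [NormedSpace ℝ Y]
    (f : Y →L[ℝ] ℝ) (M : ℝ) (hM : ∀ y : Y, f y - (1/2) * ‖y‖^2 ≤ M) :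
    (1/2) * ‖f‖^2 ≤ M := by
  have h0 : 0 ≤ M := by have := hM 0; simpa using this
  refine real_le_of_forall_pos_le_add' fun ε hε => ?_
  rcases eq_or_lt_of_le (norm_nonneg f) with hf0 | hf0
  · rw [← hf0]; nlinarith
  set δ : ℝ := min (ε / ‖f‖) ‖f‖ with hδ
  have hδpos : 0 < δ := lt_min (div_pos hε hf0) hf0
  have hδf : δ ≤ ‖f‖ := min_le_right _ _
  have hδε : δ * ‖f‖ ≤ ε := by
    have h1 : δ ≤ ε / ‖f‖ := min_le_left _ _
    calc δ * ‖f‖ ≤ (ε / ‖f‖) * ‖f‖ := by nlinarith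
      _ = ε := div_mul_cancel₀ ε (ne_of_gt hf0)
  obtain ⟨y, hy1, hy2⟩ := f.exists_lt_apply_of_lt_opNorm (r := ‖f‖ - δ) (by linarith)
  rw [Real.norm_eq_abs] at hy2
  set t : ℝ := if 0 ≤ f y then ‖f‖ else -‖f‖ with ht
  have hyt : f (t • y) = ‖f‖ * |f y| := by
    rcases le_or_gt 0 (f y) with hfy | hfy
    · simp [ht, hfy, map_smul, smul_eq_mul, abs_of_nonneg hfy]
    · simp only [ht, not_le.2 hfy, if_false, map_smul, smul_eq_mul, abs_of_neg hfy]
      ring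
  have hnt : ‖t • y‖ ≤ ‖f‖ := by
    rw [norm_smul]
    have h1 : ‖t‖ = ‖f‖ := by
      rcases le_or_gt 0 (f y) with hfy | hfy
      · simp [ht, hfy, Real.norm_eq_abs, abs_of_nonneg (norm_nonneg f)]
      · simp [ht, not_le.2 hfy, Real.norm_eq_abs, abs_of_nonneg (norm_nonneg f)]
    rw [h1]
    nlinarith [norm_nonneg y, hy1]
  have hMy := hM (t • y)
  nlinarith [norm_nonneg (t • y), abs_nonneg (f y), hf0]

lemma norm_incl {X : Type*} [NormedAddCommGroup X] [NormedSpace ℝ X] (z : X) :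
    ‖inclusionInDoubleDual ℝ X z‖ = ‖z‖ := (inclusionInDoubleDualLi ℝ (E := X)).norm_map z

end Helpers

set_option maxHeartbeats 1000000 in
/-- If `L` is a proper selfdual Lagrangian on a reflexive Banach
space, then `x ↦ ∂̄L(x) = {p : L(x,p) = ⟨x,p⟩}` is maximal monotone: its graph is
monotone and any monotonically related pair belongs to it. -/
theorem stmt6 {X : Type*} [NormedAddCommGroup X] [NormedSpace ℝ X] [CompleteSpace X]
    (hrefl : Function.Surjective (NormedSpace.inclusionInDoubleDual ℝ X))
    (L : X × StrongDual ℝ X → EReal)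
    (hproper : (∃ z, L z ≠ ⊤) ∧ ∀ z, L z ≠ ⊥)
    (hconv : ∀ a b : X × StrongDual ℝ X, ∀ t : ℝ, 0 ≤ t → t ≤ 1 →
      L (t • a + (1 - t) • b) ≤ (t : EReal) * L a + ((1 - t : ℝ) : EReal) * L b)
    (hlsc : LowerSemicontinuous L)
    (hself : ∀ x p, LagConj L p x = L (x, p)) :
    (∀ x y : X, ∀ p q : StrongDual ℝ X,
        L (x, p) = ((p x : ℝ) : EReal) → L (y, q) = ((q y : ℝ) : EReal) →
        0 ≤ (p - q) (x - y)) ∧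
    (∀ x : X, ∀ p : StrongDual ℝ X,
        (∀ y : X, ∀ q : StrongDual ℝ X, L (y, q) = ((q y : ℝ) : EReal) → 0 ≤ (p - q) (x - y)) →
        L (x, p) = ((p x : ℝ) : EReal)) := by
  classical
  obtain ⟨⟨z₀, hz₀top⟩, hnbot⟩ := hproper
  -- `L` dominates the pairing
  have hpairL : ∀ (y : X) (q : StrongDual ℝ X), ((q y : ℝ) : EReal) ≤ L (y, q) := by
    intro y q
    rcases eq_or_ne (L (y, q)) ⊤ with hT | hT
    · rw [hT]; exact le_top
    obtain ⟨l, hl⟩ := er_exists_coe (hnbot (y, q)) hT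
    have h1 : (((q y) + (q y) : ℝ) : EReal) - L (y, q) ≤ LagConj L q y :=
      le_iSup (fun yq : X × StrongDual ℝ X => (((q yq.1) + (yq.2 y) : ℝ) : EReal) - L yq) (y, q)
    rw [hself y q, hl] at h1
    rw [hl]
    norm_cast at h1 ⊢
    linarith
  have part1 : ∀ x y : X, ∀ p q : StrongDual ℝ X,
      L (x, p) = ((p x : ℝ) : EReal) → L (y, q) = ((q y : ℝ) : EReal) →
      0 ≤ (p - q) (x - y) := by
    intro x y p q hxp hyq
    have h1 : (((p y) + (q x) : ℝ) : EReal) - L (y, q) ≤ LagConj L p x :=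
      le_iSup (fun yq : X × StrongDual ℝ X => (((p yq.1) + (yq.2 x) : ℝ) : EReal) - L yq) (y, q)
    rw [hself x p, hxp, hyq] at h1
    norm_cast at h1
    simp only [ContinuousLinearMap.sub_apply, map_sub]
    linarith
  refine ⟨part1, ?_⟩
  intro x p hmon
  -- the shifted selfdual Lagrangian h
  obtain ⟨w, hw⟩ : ∃ w : X × StrongDual ℝ X, w = (x, p) := ⟨_, rfl⟩
  obtain ⟨c, hc⟩ : ∃ c : X × StrongDual ℝ X → ℝ, c = fun e => p e.1 + e.2 x + p x := ⟨_, rfl⟩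
  obtain ⟨h, hh⟩ : ∃ h : X × StrongDual ℝ X → EReal,
      h = fun e => L (e + w) - ((c e : ℝ) : EReal) := ⟨_, rfl⟩
  have hbot_h : ∀ e, h e ≠ ⊥ := by
    intro e
    rw [hh]
    exact er_sub_coe_ne_bot (hnbot _) _
  have hpair_h : ∀ (y : X) (q : StrongDual ℝ X), ((q y : ℝ) : EReal) ≤ h (y, q) := by
    intro y q
    simp only [hh]
    rw [er_le_sub]
    have h2 : ((y, q) + w) = (y + x, q + p) := by rw [hw]; rfl
    have h3 : (q y + c (y, q) : ℝ) = ((q + p) (y + x) : ℝ) := by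
      simp only [hc, ContinuousLinearMap.add_apply, map_add]
      ring
    rw [h2, h3]
    exact hpairL (y + x) (q + p)
  -- selfduality of h
  have hLC : ∀ (r : StrongDual ℝ X) (z : X), LagConj h r z = h (z, r) := by
    intro r z
    have e1 : ∀ yq : X × StrongDual ℝ X,
        (((r yq.1) + (yq.2 z) : ℝ) : EReal) - h yq
          = (fun v : X × StrongDual ℝ X =>
              ((((r + p) v.1) + (v.2 (z + x)) - (r x + p z + p x) : ℝ) : EReal) - L v)
            ((Equiv.addRight w) yq) := by
      intro yq
      simp only [hh, Equiv.coe_addRight]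
      rw [er_coe_sub_sub _ _ _ (hnbot _)]
      congr 1
      norm_cast
      simp only [hc, hw, Prod.fst_add, Prod.snd_add, ContinuousLinearMap.add_apply, map_add]
      ring
    calc LagConj h r z
        = ⨆ yq : X × StrongDual ℝ X, (fun v : X × StrongDual ℝ X =>
            ((((r + p) v.1) + (v.2 (z + x)) - (r x + p z + p x) : ℝ) : EReal) - L v)
            ((Equiv.addRight w) yq) := by
          unfold LagConj; exact iSup_congr e1
      _ = ⨆ v : X × StrongDual ℝ X,
            ((((r + p) v.1) + (v.2 (z + x)) - (r x + p z + p x) : ℝ) : EReal) - L v :=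
          Equiv.iSup_comp (g := fun v : X × StrongDual ℝ X =>
            ((((r + p) v.1) + (v.2 (z + x)) - (r x + p z + p x) : ℝ) : EReal) - L v)
            (Equiv.addRight w)
      _ = ⨆ v : X × StrongDual ℝ X,
            ((((((r + p) v.1) + (v.2 (z + x))) : ℝ) : EReal) - L v
              - ((r x + p z + p x : ℝ) : EReal)) :=
          iSup_congr fun v => er_coe_sub_sub' _ _ _
      _ = (⨆ v : X × StrongDual ℝ X, (((((r + p) v.1) + (v.2 (z + x))) : ℝ) : EReal) - L v)
            - ((r x + p z + p x : ℝ) : EReal) :=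
          er_iSup_sub_coe _ _
      _ = L (z + x, r + p) - ((r x + p z + p x : ℝ) : EReal) := by
          rw [← hself (z + x) (r + p)]; rfl
      _ = h (z, r) := by
          simp only [hh]
          rw [show ((z, r) + w) = (z + x, r + p) from by rw [hw]; rfl]
          congr 1
          norm_cast
          simp only [hc]
          ring
  -- properness of h
  obtain ⟨e₀, l₀, he₀⟩ : ∃ (e₀ : X × StrongDual ℝ X) (l₀ : ℝ), h e₀ = (l₀ : EReal) := by
    obtain ⟨l, hl⟩ := er_exists_coe (hnbot z₀) hz₀top
    refine ⟨z₀ - w, l - c (z₀ - w), ?_⟩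
    simp only [hh]
    rw [show z₀ - w + w = z₀ from by abel, hl]
    norm_cast
  -- convexity of h
  have hconv_h : ∀ (e₁ e₂ : X × StrongDual ℝ X) (t₁ t₂ a b : ℝ), 0 ≤ a → 0 ≤ b → a + b = 1 →
      h e₁ ≤ (t₁ : EReal) → h e₂ ≤ (t₂ : EReal) →
      h (a • e₁ + b • e₂) ≤ ((a * t₁ + b * t₂ : ℝ) : EReal) := by
    intro e₁ e₂ t₁ t₂ a b ha hb hab h₁ h₂
    have hb' : b = 1 - a := by linarith
    have ha1 : a ≤ 1 := by linarith
    simp only [hh] at h₁ h₂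
    rw [er_sub_le] at h₁ h₂
    obtain ⟨l₁, hl₁, hl₁le⟩ := er_eq_coe_of_le_coe (hnbot _) h₁
    obtain ⟨l₂, hl₂, hl₂le⟩ := er_eq_coe_of_le_coe (hnbot _) h₂
    have hsum : a • e₁ + b • e₂ + w = a • (e₁ + w) + (1 - a) • (e₂ + w) := by
      rw [hb']; module
    have hcv := hconv (e₁ + w) (e₂ + w) a ha ha1
    rw [hl₁, hl₂] at hcv
    have hcv2 : L (a • e₁ + b • e₂ + w) ≤ ((a * l₁ + b * l₂ : ℝ) : EReal) := by
      rw [hsum]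
      refine hcv.trans_eq ?_
      rw [hb']
      norm_cast
    have hcmb : c (a • e₁ + b • e₂) = a * c e₁ + b * c e₂ := by
      simp only [hc, Prod.fst_add, Prod.snd_add, Prod.smul_fst, Prod.smul_snd, map_add,
        map_smul, ContinuousLinearMap.add_apply, ContinuousLinearMap.coe_smul',
        Pi.smul_apply, smul_eq_mul]
      linear_combination (-(p x)) * hab
    simp only [hh]
    rw [er_sub_le]
    refine hcv2.trans ?_
    rw [EReal.coe_le_coe_iff, hcmb]
    nlinarith [mul_le_mul_of_nonneg_left hl₁le ha, mul_le_mul_of_nonneg_left hl₂le hb]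
  -- the quadratic function and the two convex sets
  obtain ⟨gq, hgq⟩ : ∃ gq : X × StrongDual ℝ X → ℝ,
      gq = fun e => (1/2) * ‖e.1‖^2 + (1/2) * ‖e.2‖^2 := ⟨_, rfl⟩
  obtain ⟨B, hB⟩ : ∃ B : Set ((X × StrongDual ℝ X) × ℝ),
      B = {wt | gq wt.1 + wt.2 < 0} := ⟨_, rfl⟩
  obtain ⟨A, hA⟩ : ∃ A : Set ((X × StrongDual ℝ X) × ℝ),
      A = {wt | h wt.1 ≤ (wt.2 : EReal)} := ⟨_, rfl⟩
  have hgq_cv : ∀ (e₁ e₂ : X × StrongDual ℝ X) (a b : ℝ), 0 ≤ a → 0 ≤ b → a + b = 1 →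
      gq (a • e₁ + b • e₂) ≤ a * gq e₁ + b * gq e₂ := by
    intro e₁ e₂ a b ha hb hab
    simp only [hgq, Prod.fst_add, Prod.snd_add, Prod.smul_fst, Prod.smul_snd]
    have n1 : ‖a • e₁.1 + b • e₂.1‖ ≤ a * ‖e₁.1‖ + b * ‖e₂.1‖ := by
      refine (norm_add_le _ _).trans ?_
      rw [norm_smul, norm_smul, Real.norm_eq_abs, Real.norm_eq_abs,
        abs_of_nonneg ha, abs_of_nonneg hb]
    have n2 : ‖a • e₁.2 + b • e₂.2‖ ≤ a * ‖e₁.2‖ + b * ‖e₂.2‖ := by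
      refine (norm_add_le _ _).trans ?_
      rw [norm_smul, norm_smul, Real.norm_eq_abs, Real.norm_eq_abs,
        abs_of_nonneg ha, abs_of_nonneg hb]
    have s1 : ‖a • e₁.1 + b • e₂.1‖^2 ≤ (a * ‖e₁.1‖ + b * ‖e₂.1‖)^2 := by
      nlinarith [norm_nonneg (a • e₁.1 + b • e₂.1)]
    have s2 : ‖a • e₁.2 + b • e₂.2‖^2 ≤ (a * ‖e₁.2‖ + b * ‖e₂.2‖)^2 := by
      nlinarith [norm_nonneg (a • e₁.2 + b • e₂.2)]
    nlinarith [mul_nonneg (mul_nonneg ha hb) (sq_nonneg (‖e₁.1‖ - ‖e₂.1‖)),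
      mul_nonneg (mul_nonneg ha hb) (sq_nonneg (‖e₁.2‖ - ‖e₂.2‖))]
  have hB_open : IsOpen B := by
    have cg : Continuous fun wt : (X × StrongDual ℝ X) × ℝ => gq wt.1 + wt.2 := by
      simp only [hgq]
      fun_prop
    rw [hB]
    exact isOpen_lt cg continuous_const
  have hB_conv : Convex ℝ B := by
    intro w₁ hw₁ w₂ hw₂ a b ha hb hab
    simp only [hB, Set.mem_setOf_eq] at hw₁ hw₂ ⊢
    have hcv := hgq_cv w₁.1 w₂.1 a b ha hb hab
    have hfst : (a • w₁ + b • w₂).1 = a • w₁.1 + b • w₂.1 := rfl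
    have hsnd : (a • w₁ + b • w₂).2 = a * w₁.2 + b * w₂.2 := rfl
    rw [hfst, hsnd]
    have hkey : a * (gq w₁.1 + w₁.2) + b * (gq w₂.1 + w₂.2) < 0 := by
      rcases lt_or_ge 0 a with hpa | hpa
      · have h1 := mul_neg_of_pos_of_neg hpa hw₁
        have h2 := mul_nonpos_of_nonneg_of_nonpos hb hw₂.le
        linarith
      · have ha0 : a = 0 := le_antisymm hpa ha
        have hb1 : b = 1 := by linarith
        rw [ha0, hb1]; simpa using hw₂
    nlinarith
  have hA_conv : Convex ℝ A := by
    intro w₁ hw₁ w₂ hw₂ a b ha hb hab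
    simp only [hA, Set.mem_setOf_eq] at hw₁ hw₂ ⊢
    have hfst : (a • w₁ + b • w₂).1 = a • w₁.1 + b • w₂.1 := rfl
    have hsnd : (a • w₁ + b • w₂).2 = a * w₁.2 + b * w₂.2 := rfl
    rw [hfst, hsnd]
    push_cast
    exact hconv_h _ _ _ _ a b ha hb hab hw₁ hw₂
  have hdisj : Disjoint B A := by
    rw [Set.disjoint_left]
    rintro ⟨⟨y, q⟩, t⟩ hBm hAm
    simp only [hB, hA, Set.mem_setOf_eq] at hBm hAm
    have h1 : ((q y : ℝ) : EReal) ≤ (t : EReal) := (hpair_h y q).trans hAm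
    rw [EReal.coe_le_coe_iff] at h1
    have h2 : |q y| ≤ ‖q‖ * ‖y‖ := by
      have := q.le_opNorm y
      rwa [Real.norm_eq_abs] at this
    have h3 := abs_le.1 h2
    simp only [hgq] at hBm
    nlinarith [sq_nonneg (‖y‖ - ‖q‖)]
  obtain ⟨ψ, u, hBlt, hAge⟩ := geometric_hahn_banach_open hB_conv hB_open hA_conv hdisj
  obtain ⟨s, hs⟩ : ∃ s : ℝ, s = ψ ((0 : X × StrongDual ℝ X), (1 : ℝ)) := ⟨_, rfl⟩
  have hψ : ∀ (e : X × StrongDual ℝ X) (t : ℝ), ψ (e, t) = ψ (e, 0) + t * s := by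
    intro e t
    have h1 : ((e, t) : (X × StrongDual ℝ X) × ℝ)
        = (e, 0) + t • ((0 : X × StrongDual ℝ X), (1 : ℝ)) := by
      simp [Prod.ext_iff]
    rw [h1, map_add, map_smul, smul_eq_mul, hs]
  have hψ_add : ∀ e₁ e₂ : X × StrongDual ℝ X, ψ (e₁ + e₂, 0) = ψ (e₁, 0) + ψ (e₂, 0) := by
    intro e₁ e₂
    have h1 : ((e₁ + e₂, (0 : ℝ)) : (X × StrongDual ℝ X) × ℝ) = (e₁, (0 : ℝ)) + (e₂, 0) := by
      simp [Prod.ext_iff]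
    rw [h1, map_add]
  have hψ_smul : ∀ (a : ℝ) (e : X × StrongDual ℝ X), ψ (a • e, 0) = a * ψ (e, 0) := by
    intro a e
    have h1 : ((a • e, (0 : ℝ)) : (X × StrongDual ℝ X) × ℝ) = a • (e, (0 : ℝ)) := by
      simp [Prod.ext_iff]
    rw [h1, map_smul, smul_eq_mul]
  have hs_ne : s ≠ 0 := by
    intro hs0
    have hB0 : ∀ e : X × StrongDual ℝ X, ψ (e, 0) < u := by
      intro e
      have hmem : ((e, -gq e - 1) : (X × StrongDual ℝ X) × ℝ) ∈ B := by
        simp only [hB, Set.mem_setOf_eq]; linarith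
      have := hBlt _ hmem
      rwa [hψ, hs0, mul_zero, add_zero] at this
    have hu_pos : 0 < u := by
      have := hB0 0
      rwa [show ((0 : X × StrongDual ℝ X), (0 : ℝ)) = 0 from rfl, map_zero] at this
    have hnonpos : ∀ e : X × StrongDual ℝ X, ψ (e, 0) ≤ 0 := by
      intro e
      by_contra hcon
      push_neg at hcon
      have hne := hB0 ((u / ψ (e, 0)) • e)
      rw [hψ_smul, div_mul_cancel₀ u (ne_of_gt hcon)] at hne
      exact lt_irrefl u hne
    have hzero : ∀ e : X × StrongDual ℝ X, ψ (e, 0) = 0 := by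
      intro e
      have h1 := hnonpos e
      have h2 := hnonpos (-e)
      have h3 : ψ (-e, 0) = -ψ (e, 0) := by
        have h4 : ((-e, (0 : ℝ)) : (X × StrongDual ℝ X) × ℝ) = (-1 : ℝ) • (e, (0 : ℝ)) := by
          simp [Prod.ext_iff]; exact (neg_one_smul ℝ _).symm
        rw [h4, map_smul]; simp
      rw [h3] at h2
      linarith
    have hge := hAge (e₀, l₀) (by simp only [hA, Set.mem_setOf_eq]; exact le_of_eq he₀)
    rw [hψ, hs0, mul_zero, add_zero, hzero] at hge
    linarith
  have hs_nonneg : 0 ≤ s := by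
    by_contra hcon
    push_neg at hcon
    have hmem : ((e₀, max l₀ ((u - ψ (e₀, 0) - 1) / s)) : (X × StrongDual ℝ X) × ℝ) ∈ A := by
      simp only [hA, Set.mem_setOf_eq]
      calc h e₀ = (l₀ : EReal) := he₀
        _ ≤ _ := EReal.coe_le_coe_iff.2 (le_max_left _ _)
    have hge := hAge _ hmem
    rw [hψ] at hge
    have ht2 : (u - ψ (e₀, 0) - 1) / s ≤ max l₀ ((u - ψ (e₀, 0) - 1) / s) := le_max_right _ _
    have ht3 : max l₀ ((u - ψ (e₀, 0) - 1) / s) * s ≤ u - ψ (e₀, 0) - 1 :=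
      (div_le_iff_of_neg hcon).1 ht2
    linarith
  have hs_pos : 0 < s := lt_of_le_of_ne hs_nonneg (Ne.symm hs_ne)
  -- the dual pair (R, z)
  obtain ⟨R, hR⟩ : ∃ R : StrongDual ℝ X, R = (-(s⁻¹)) • (ψ.comp
      ((ContinuousLinearMap.inl ℝ (X × StrongDual ℝ X) ℝ).comp
        (ContinuousLinearMap.inl ℝ X (StrongDual ℝ X)))) := ⟨_, rfl⟩
  obtain ⟨Zb, hZb⟩ : ∃ Zb : StrongDual ℝ (StrongDual ℝ X), Zb = (-(s⁻¹)) • (ψ.comp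
      ((ContinuousLinearMap.inl ℝ (X × StrongDual ℝ X) ℝ).comp
        (ContinuousLinearMap.inr ℝ X (StrongDual ℝ X)))) := ⟨_, rfl⟩
  have hR_apply : ∀ y : X, R y = -(s⁻¹) * ψ ((y, 0), 0) := by
    intro y
    simp [hR]
  have hZb_apply : ∀ q : StrongDual ℝ X, Zb q = -(s⁻¹) * ψ ((0, q), 0) := by
    intro q
    simp [hZb]
  obtain ⟨z, hz⟩ := hrefl Zb
  have hqz : ∀ q : StrongDual ℝ X, q z = Zb q := by
    intro q
    rw [← hz]
    rfl
  have hφRZ : ∀ (y : X) (q : StrongDual ℝ X), ψ ((y, q), 0) = -s * (R y + q z) := by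
    intro y q
    have hsplit : ψ ((y, q), 0) = ψ ((y, 0), 0) + ψ ((0, q), 0) := by
      rw [← hψ_add]
      congr 1
      simp [Prod.ext_iff]
    rw [hsplit, hR_apply, hqz, hZb_apply]
    field_simp
    ring
  -- A-side estimate
  have key1 : h (z, R) ≤ ((-(u / s) : ℝ) : EReal) := by
    rw [← hLC R z]
    unfold LagConj
    refine iSup_le ?_
    rintro ⟨y, q⟩
    rcases eq_or_ne (h (y, q)) ⊤ with hT | hT
    · rw [hT]
      rw [EReal.sub_top]
      exact bot_le
    obtain ⟨l, hl⟩ := er_exists_coe (hbot_h (y, q)) hT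
    rw [hl, ← EReal.coe_sub, EReal.coe_le_coe_iff]
    have hmem : (((y, q), l) : (X × StrongDual ℝ X) × ℝ) ∈ A := by
      simp only [hA, Set.mem_setOf_eq]
      exact le_of_eq hl
    have hge := hAge _ hmem
    rw [hψ, hφRZ] at hge
    rw [← neg_div, le_div_iff₀ hs_pos]
    nlinarith
  -- B-side estimate
  have key2 : ∀ (y : X) (q : StrongDual ℝ X), -s * (R y + q z) - s * gq (y, q) ≤ u := by
    intro y q
    refine real_le_of_forall_pos_le_add' fun δ hδ => ?_
    have hmem : (((y, q), -gq (y, q) - δ / s) : (X × StrongDual ℝ X) × ℝ) ∈ B := by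
      simp only [hB, Set.mem_setOf_eq]
      have : 0 < δ / s := div_pos hδ hs_pos
      linarith
    have hlt := hBlt _ hmem
    rw [hψ, hφRZ] at hlt
    have h2 : s * (δ / s) = δ := by field_simp
    nlinarith
  have key2a : ∀ (y : X) (q : StrongDual ℝ X),
      (-(inclusionInDoubleDual ℝ X z)) q - (1/2) * ‖q‖^2
        ≤ u / s - ((-R) y - (1/2) * ‖y‖^2) := by
    intro y q
    have h1 := key2 y q
    have h3 : -(R y + q z) - gq (y, q) ≤ u / s := by
      rw [le_div_iff₀ hs_pos]
      nlinarith
    simp only [hgq] at h3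
    simp only [ContinuousLinearMap.neg_apply]
    have h4 : inclusionInDoubleDual ℝ X z q = q z := rfl
    rw [h4]
    linarith
  have key2b : ∀ y : X,
      (-R) y - (1/2) * ‖y‖^2 ≤ u / s - (1/2) * ‖-(inclusionInDoubleDual ℝ X z)‖^2 := by
    intro y
    have h1 := half_norm_sq_le (-(inclusionInDoubleDual ℝ X z)) _ (key2a y)
    linarith
  have key3 : (1/2) * ‖R‖^2 + (1/2) * ‖z‖^2 ≤ u / s := by
    have h1 := half_norm_sq_le (-R) _ key2b
    rw [norm_neg] at h1
    have h2 : ‖-(inclusionInDoubleDual ℝ X z)‖ = ‖z‖ := by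
      rw [← norm_incl z]; exact norm_neg (inclusionInDoubleDual ℝ X z)
    rw [h2] at h1
    linarith
  -- sandwich: (z, R) is a graph point
  have hRz_le : R z ≤ -(u / s) := by
    have h1 := (hpair_h z R).trans key1
    exact EReal.coe_le_coe_iff.1 h1
  have hle2 : -(u / s) ≤ R z := by
    have h2 : |R z| ≤ ‖R‖ * ‖z‖ := by
      have := R.le_opNorm z
      rwa [Real.norm_eq_abs] at this
    have h3 := abs_le.1 h2
    nlinarith [sq_nonneg (‖R‖ - ‖z‖)]
  have hRz : R z = -(u / s) := le_antisymm hRz_le hle2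
  have hgraph_h : h (z, R) = ((R z : ℝ) : EReal) := by
    refine le_antisymm ?_ (hpair_h z R)
    rw [hRz]
    exact key1
  have hgraph : L (z + x, R + p) = (((R + p) (z + x) : ℝ) : EReal) := by
    have h1 : h (z, R) = L (z + x, R + p) - ((c (z, R) : ℝ) : EReal) := by
      simp only [hh]
      rw [show ((z, R) + w) = (z + x, R + p) from by rw [hw]; rfl]
    rw [h1] at hgraph_h
    have le1 : L (z + x, R + p) ≤ ((R z + c (z, R) : ℝ) : EReal) :=
      (er_sub_le _ _ _).1 hgraph_h.le
    have ge1 : ((R z + c (z, R) : ℝ) : EReal) ≤ L (z + x, R + p) :=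
      (er_le_sub _ _ _).1 hgraph_h.ge
    have heq : L (z + x, R + p) = ((R z + c (z, R) : ℝ) : EReal) := le_antisymm le1 ge1
    rw [heq]
    congr 1
    simp only [hc, ContinuousLinearMap.add_apply, map_add]
    ring
  have h0 := hmon (z + x) (R + p) hgraph
  have h5 : (p - (R + p)) (x - (z + x)) = R z := by
    simp only [ContinuousLinearMap.sub_apply, ContinuousLinearMap.add_apply, map_sub, map_add]
    ring
  rw [h5] at h0
  have hus : u / s ≤ 0 := by rw [hRz] at h0; linarith
  have hsq : (1/2) * ‖R‖^2 + (1/2) * ‖z‖^2 ≤ 0 := le_trans key3 hus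
  have hzn : ‖z‖ = 0 := by
    nlinarith only [hsq, norm_nonneg z, norm_nonneg (R : StrongDual ℝ X), sq_nonneg ‖z‖,
      sq_nonneg ‖(R : StrongDual ℝ X)‖]
  have hRn : ‖(R : StrongDual ℝ X)‖ = 0 := by
    nlinarith only [hsq, norm_nonneg z, norm_nonneg (R : StrongDual ℝ X), sq_nonneg ‖z‖,
      sq_nonneg ‖(R : StrongDual ℝ X)‖]
  have hz0 : z = 0 := norm_eq_zero.1 hzn
  have hR0 : R = 0 := norm_eq_zero.1 hRn
  rw [hz0, hR0] at hgraph
  simpa using hgraph
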